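/- arXiv:1406.1300 — 3 statements merged into one kernel-verified Lean document; each statement's English description precedes it below -/
import Mathlib

section
/- Let T be a tree (a connected acyclic simple graph) on a finite nonempty vertex set V. Then for every orientation σ of T, the skew Randić energy of T^σ equals the Randić energy of T: RE_s(T^σ) = RE(T). -/
set_option linter.unusedSectionVars false
set_option linter.unnecessarySimpa false

open Matrix Polynomial

lemma charpoly_eq_of_diag_conj {n : Type*} [Fintype n] [DecidableEq n]
    (f : n → ℂ) (hf : ∀ i, f i ≠ 0) {M N : Matrix n n ℂ}
    (h : Matrix.diagonal f * M = N * Matrix.diagonal f) :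
    M.charpoly = N.charpoly := by
  have key : Matrix.diagonal (fun i => (C (f i) : ℂ[X])) * charmatrix M
      = charmatrix N * Matrix.diagonal (fun i => (C (f i) : ℂ[X])) := by
    have hmapdiag : (Matrix.diagonal f).map (C : ℂ →+* ℂ[X]) =
        Matrix.diagonal (fun i => (C (f i) : ℂ[X])) := by
      ext i j; by_cases hij : i = j <;> simp [Matrix.diagonal_apply, hij]
    have hmul : (Matrix.diagonal (fun i => (C (f i) : ℂ[X]))) * (M.map C)
        = (N.map C) * Matrix.diagonal (fun i => (C (f i) : ℂ[X])) := by
      rw [← hmapdiag, ← Matrix.map_mul, ← Matrix.map_mul, h]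
    have hscalar : ∀ (A : Matrix n n ℂ[X]), A * Matrix.scalar n (X : ℂ[X])
        = Matrix.scalar n (X : ℂ[X]) * A :=
      fun A => (Matrix.scalar_commute (X : ℂ[X]) (fun r => Commute.all _ _) A).symm.eq
    rw [charmatrix, charmatrix, mul_sub, sub_mul, hscalar, RingHom.mapMatrix_apply,
      RingHom.mapMatrix_apply, hmul]
  have hdet := congrArg Matrix.det key
  rw [Matrix.det_mul, Matrix.det_mul, Matrix.det_diagonal, mul_comm] at hdet
  have hne : (∏ i, (C (f i) : ℂ[X])) ≠ 0 :=
    Finset.prod_ne_zero_iff.mpr fun i _ => by simpa using hf i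
  show M.charmatrix.det = N.charmatrix.det
  rw [mul_comm, mul_comm (N.charmatrix.det)] at hdet
  exact mul_left_cancel₀ hne hdet

lemma roots_charpoly_smul {n : Type*} [Fintype n] [DecidableEq n]
    (M : Matrix n n ℂ) {c : ℂ} (hc : c ≠ 0) :
    M.charpoly.roots = ((c • M).charpoly.roots).map (fun z => z / c) := by
  set N := Fintype.card n with hN
  set q := (c • M).charpoly with hq
  have hcomp : q.comp (C c * X) = C (c ^ N) * M.charpoly := by
    have h1 : q.comp (C c * X) = ((charmatrix (c • M)).map
        ((aeval (C c * X) : ℂ[X] →ₐ[ℂ] ℂ[X]) : ℂ[X] → ℂ[X])).det := by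
      rw [hq, Matrix.charpoly, comp_eq_aeval,
        AlgHom.map_det (aeval (C c * X) : ℂ[X] →ₐ[ℂ] ℂ[X]), AlgHom.mapMatrix_apply]
    rw [h1]
    have hmat : (charmatrix (c • M)).map
        ((aeval (C c * X) : ℂ[X] →ₐ[ℂ] ℂ[X]) : ℂ[X] → ℂ[X])
        = (C c) • charmatrix M := by
      apply Matrix.ext; intro i j
      by_cases hij : i = j
      · subst hij
        rw [Matrix.map_apply, Matrix.smul_apply, charmatrix_apply_eq, charmatrix_apply_eq,
          map_sub, aeval_X, aeval_C]
        simp only [Matrix.smul_apply, smul_eq_mul, algebraMap_eq]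
        rw [C_mul]; ring
      · rw [Matrix.map_apply, Matrix.smul_apply, charmatrix_apply_ne _ _ _ hij,
          charmatrix_apply_ne _ _ _ hij, map_neg, aeval_C]
        simp only [Matrix.smul_apply, smul_eq_mul, algebraMap_eq]
        rw [C_mul]; ring
    rw [hmat, Matrix.det_smul, map_pow]
    rfl
  have hqsplits : Splits q := IsAlgClosed.splits q
  have hqprod : q = (q.roots.map fun μ => X - C μ).prod :=
    hqsplits.eq_prod_roots_of_monic (Matrix.charpoly_monic _)
  have hcard : q.roots.card = N := by
    rw [splits_iff_card_roots.mp hqsplits]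
    exact Matrix.charpoly_natDegree_eq_dim _
  have hcompProd : q.comp (C c * X)
      = C c ^ N * (q.roots.map fun μ => X - C (μ / c)).prod := by
    conv_lhs => rw [hqprod]
    rw [comp_eq_aeval, map_multiset_prod, Multiset.map_map]
    have heach : ∀ μ : ℂ, (aeval (C c * X) : ℂ[X] →ₐ[ℂ] ℂ[X]) (X - C μ)
        = C c * (X - C (μ / c)) := by
      intro μ
      rw [map_sub, aeval_X, aeval_C, mul_sub, ← C_mul, mul_div_cancel₀ _ hc]
      rfl
    have : ((q.roots.map fun μ => (aeval (C c * X)) (X - C μ))).prod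
        = ((q.roots.map fun μ => C c * (X - C (μ / c)))).prod := by
      congr 1
      exact Multiset.map_congr rfl fun μ _ => heach μ
    rw [Function.comp_def]
    rw [this, Multiset.prod_map_mul]
    congr 1
    rw [Multiset.map_const', Multiset.prod_replicate, hcard]
  have hM : M.charpoly = ((q.roots.map fun μ => μ / c).map fun a => X - C a).prod := by
    have hcn : (C c : ℂ[X]) ^ N ≠ 0 := pow_ne_zero _ (by simpa using hc)
    apply mul_left_cancel₀ hcn
    rw [← map_pow, ← hcomp, hcompProd, map_pow, Multiset.map_map]
    rfl
  rw [hM, roots_multiset_prod_X_sub_C]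

section TreeAux

section TreePhase
variable {V : Type*} [Fintype V] [DecidableEq V]
  (T : SimpleGraph V) [DecidableRel T.Adj]

noncomputable def wprod (σ : V → V → ℝ) {v w : V} (p : T.Walk v w) : ℂ :=
  (p.darts.map fun d => (-Complex.I) * ((σ d.fst d.snd : ℝ) : ℂ)).prod

lemma wprod_concat (σ : V → V → ℝ) {u v w : V} (p : T.Walk u v) (h : T.Adj v w) :
    wprod T σ (p.concat h) = wprod T σ p * ((-Complex.I) * ((σ v w : ℝ) : ℂ)) := by
  simp [wprod, SimpleGraph.Walk.darts_concat]

lemma wprod_append (σ : V → V → ℝ) {u v w : V} (p : T.Walk u v) (q : T.Walk v w) :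
    wprod T σ (p.append q) = wprod T σ p * wprod T σ q := by
  simp [wprod, SimpleGraph.Walk.darts_append]

lemma wprod_ne_zero (σ : V → V → ℝ)
    (hpm : ∀ v w, T.Adj v w → σ v w = 1 ∨ σ v w = -1) {v w : V} (p : T.Walk v w) :
    wprod T σ p ≠ 0 := by
  unfold wprod
  apply List.prod_ne_zero
  intro h0
  obtain ⟨d, hd, hval⟩ := List.mem_map.mp h0
  rcases hpm _ _ d.adj with h1 | h1 <;> rw [h1] at hval <;>
    simpa [Complex.ext_iff] using hval

end TreePhase

lemma exists_good_f {V : Type*} [Fintype V] [DecidableEq V] [Nonempty V]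
    (T : SimpleGraph V) [DecidableRel T.Adj] (hT : T.IsTree) (σ : V → V → ℝ)
    (hanti : ∀ v w, σ v w + σ w v = 0)
    (hpm : ∀ v w, T.Adj v w → σ v w = 1 ∨ σ v w = -1) :
    ∃ f : V → ℂ, (∀ v, f v ≠ 0) ∧
      ∀ v w, T.Adj v w → f w = -Complex.I * ((σ v w : ℝ) : ℂ) * f v := by
  have r : V := Classical.arbitrary V
  choose P hP hPu using (hT.existsUnique_path r ·)
  refine ⟨fun v => wprod T σ (P v), fun v => wprod_ne_zero T σ hpm _, ?_⟩
  intro v w h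
  have hmul1 : ((-Complex.I) * ((σ w v : ℝ) : ℂ)) * ((-Complex.I) * ((σ v w : ℝ) : ℂ)) = 1 := by
    have hswv : σ w v = -σ v w := by linarith [hanti v w]
    rcases hpm v w h with h1 | h1 <;>
      · rw [hswv, h1]; push_cast; ring_nf; simp [Complex.I_sq]
  by_cases hw : w ∈ (P v).support
  · have htake : (P v).takeUntil w hw = P w := hPu w _ ((hP v).takeUntil hw)
    have hdrop : (P v).dropUntil w hw
        = SimpleGraph.Walk.cons h.symm SimpleGraph.Walk.nil := by
      refine (hT.existsUnique_path w v).unique ((hP v).dropUntil hw) ?_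
      rw [SimpleGraph.Walk.cons_isPath_iff]
      simpa using h.ne'
    have hspec := congrArg (wprod T σ) ((P v).take_spec hw)
    rw [wprod_append, htake, hdrop] at hspec
    have hcons : wprod T σ (SimpleGraph.Walk.cons h.symm (SimpleGraph.Walk.nil : T.Walk v v))
        = (-Complex.I) * ((σ w v : ℝ) : ℂ) := by
      simp [wprod]
    rw [hcons] at hspec
    show wprod T σ (P w) = -Complex.I * ((σ v w : ℝ) : ℂ) * wprod T σ (P v)
    rw [← hspec]
    calc wprod T σ (P w)
        = wprod T σ (P w) * (((-Complex.I) * ((σ w v : ℝ) : ℂ))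
            * ((-Complex.I) * ((σ v w : ℝ) : ℂ))) := by rw [hmul1, mul_one]
      _ = -Complex.I * ((σ v w : ℝ) : ℂ)
            * (wprod T σ (P w) * ((-Complex.I) * ((σ w v : ℝ) : ℂ))) := by ring
  · have hpath : ((P v).concat h).IsPath := by
      rw [← SimpleGraph.Walk.isPath_reverse_iff, SimpleGraph.Walk.reverse_concat]
      exact ((hP v).reverse).cons (by simpa using hw)
    have hPw : (P v).concat h = P w := hPu w _ hpath
    have := congrArg (wprod T σ) hPw
    rw [wprod_concat] at this
    show wprod T σ (P w) = -Complex.I * ((σ v w : ℝ) : ℂ) * wprod T σ (P v)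
    rw [← this]; ring

end TreeAux


/-- `σ` is an orientation of the simple graph `G`. -/
def IsOrientation {V : Type*} [Fintype V] (G : SimpleGraph V) [DecidableRel G.Adj]
    (σ : V → V → ℝ) : Prop :=
  (∀ v w, σ v w + σ w v = 0) ∧
  (∀ v w, G.Adj v w → σ v w = 1 ∨ σ v w = -1) ∧
  (∀ v w, ¬ G.Adj v w → σ v w = 0)

/-- The skew Randić matrix of the oriented graph `G^σ`. -/
noncomputable def skewRandicMatrix {V : Type*} [Fintype V] (G : SimpleGraph V)
    [DecidableRel G.Adj] (σ : V → V → ℝ) : Matrix V V ℝ :=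
  fun v w => σ v w / Real.sqrt ((G.degree v : ℝ) * (G.degree w : ℝ))

/-- The Randić matrix of `G`. -/
noncomputable def randicMatrix {V : Type*} [Fintype V] (G : SimpleGraph V)
    [DecidableRel G.Adj] : Matrix V V ℝ :=
  fun v w => if G.Adj v w then 1 / Real.sqrt ((G.degree v : ℝ) * (G.degree w : ℝ)) else 0

/-- The spectrum of a real matrix: the multiset of roots, with multiplicity, of its
characteristic polynomial regarded as a matrix over `ℂ`. -/
noncomputable def spec {V : Type*} [Fintype V] [DecidableEq V] (M : Matrix V V ℝ) :
    Multiset ℂ :=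
  (M.map (fun x : ℝ => (x : ℂ))).charpoly.roots

/-- The energy of a real matrix: the sum of the absolute values of its spectrum. -/
noncomputable def energy {V : Type*} [Fintype V] [DecidableEq V] (M : Matrix V V ℝ) : ℝ :=
  ((spec M).map (fun z => ‖z‖)).sum

/-- The general Randić index `R_{-1}(G)`: the sum over all edges `{v,w}` of
`1/(d(v)·d(w))`. -/
noncomputable def randicIndexNegOne {V : Type*} [Fintype V] [DecidableEq V]
    (G : SimpleGraph V) [DecidableRel G.Adj] : ℝ :=
  ∑ e ∈ G.edgeFinset,
    Sym2.lift ⟨fun v w => 1 / ((G.degree v : ℝ) * (G.degree w : ℝ)),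
      fun v w => by simp [mul_comm]⟩ e

theorem skewRandic_energy_tree_eq_randic_energy
    {V : Type*} [Fintype V] [DecidableEq V] [Nonempty V]
    (T : SimpleGraph V) [DecidableRel T.Adj]
    (hconn : T.Connected) (hacyc : T.IsAcyclic)
    (σ : V → V → ℝ) (hσ : IsOrientation T σ) :
    energy (skewRandicMatrix T σ) = energy (randicMatrix T) := by
  obtain ⟨hanti, hpm, hzero⟩ := hσ
  obtain ⟨f, hf0, hstep⟩ := exists_good_f T ⟨hconn, hacyc⟩ σ hanti hpm
  set Sc := (skewRandicMatrix T σ).map (fun x : ℝ => (x : ℂ)) with hSc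
  set Rc := (randicMatrix T).map (fun x : ℝ => (x : ℂ)) with hRc
  have hsim : Matrix.diagonal f * Sc = (Complex.I • Rc) * Matrix.diagonal f := by
    apply Matrix.ext; intro i j
    rw [Matrix.diagonal_mul, Matrix.mul_diagonal, Matrix.smul_apply]
    by_cases hadj : T.Adj i j
    · have hsij : Sc i j = ((σ i j : ℝ) : ℂ)
          / ((Real.sqrt ((T.degree i : ℝ) * (T.degree j : ℝ)) : ℝ) : ℂ) := by
        simp [hSc, skewRandicMatrix, Matrix.map_apply]
      have hrij : Rc i j = 1
          / ((Real.sqrt ((T.degree i : ℝ) * (T.degree j : ℝ)) : ℝ) : ℂ) := by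
        simp [hRc, randicMatrix, Matrix.map_apply, hadj]
      rw [hsij, hrij, hstep i j hadj, smul_eq_mul]
      set s := ((Real.sqrt ((T.degree i : ℝ) * (T.degree j : ℝ)) : ℝ) : ℂ)
      by_cases hs : s = 0
      · rw [hs]; simp
      · field_simp
        linear_combination ((f i) * ((σ i j : ℝ) : ℂ)) * Complex.I_mul_I
    · have hsij : Sc i j = 0 := by
        simp [hSc, skewRandicMatrix, Matrix.map_apply, hzero i j hadj]
      have hrij : Rc i j = 0 := by
        simp [hRc, randicMatrix, Matrix.map_apply, hadj]
      rw [hsij, hrij, smul_eq_mul]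
      ring
  have hcp : Sc.charpoly = (Complex.I • Rc).charpoly :=
    charpoly_eq_of_diag_conj f hf0 hsim
  have hroots := roots_charpoly_smul Rc (c := Complex.I) Complex.I_ne_zero
  show ((Sc.charpoly.roots).map (fun z => ‖z‖)).sum
      = ((Rc.charpoly.roots).map (fun z => ‖z‖)).sum
  rw [hroots, ← hcp, Multiset.map_map]
  congr 1
  apply Multiset.map_congr rfl
  intro z _
  simp [Function.comp, map_div₀]
end

section
/- Let X be a real m×n matrix and form the real square matrices A = [[0, X], [Xᵀ, 0]] and B = [[0, X], [−Xᵀ, 0]] of size (m+n)×(m+n). Then the multiset of roots (with multiplicity, over ℂ) of the characteristic polynomial of B equals the image under multiplication by i of the multiset of roots of the characteristic polynomial of A; in symbols, Sp(B) = i·Sp(A). -/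
open Matrix Polynomial

variable {N : Type*} [Fintype N] [DecidableEq N]

lemma my_eval_charpoly (M : Matrix N N ℂ) (t : ℂ) :
    M.charpoly.eval t = (t • (1 : Matrix N N ℂ) - M).det := by
  rw [Matrix.charpoly, ← Polynomial.coe_evalRingHom, RingHom.map_det]
  congr 1
  ext i j
  by_cases h : i = j
  · subst h
    simp [charmatrix_apply_eq, Matrix.one_apply]
  · simp [charmatrix_apply_ne _ _ _ h, Matrix.one_apply_ne h]

lemma my_roots_charpoly_smul (c : ℂ) (hc : c ≠ 0) (M : Matrix N N ℂ) :
    (c • M).charpoly.roots = M.charpoly.roots.map (fun r => c * r) := by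
  have hmon := M.charpoly_monic
  have hsplit : Splits M.charpoly := IsAlgClosed.splits _
  have hcard : Multiset.card M.charpoly.roots = Fintype.card N := by
    rw [(Polynomial.splits_iff_card_roots).mp hsplit, Matrix.charpoly_natDegree_eq_dim]
  have hprod : M.charpoly = (M.charpoly.roots.map (fun r => X - C r)).prod :=
    hsplit.eq_prod_roots_of_monic hmon
  have key : (c • M).charpoly
      = ((M.charpoly.roots.map (fun r => c * r)).map (fun r => X - C r)).prod := by
    set s := M.charpoly.roots with hs
    apply Polynomial.funext
    intro t
    have h1 : t • (1 : Matrix N N ℂ) - c • M = c • ((c⁻¹ * t) • (1 : Matrix N N ℂ) - M) := by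
      rw [smul_sub, smul_smul, mul_inv_cancel_left₀ hc]
    have hl : Polynomial.eval t (c • M).charpoly
        = c ^ Fintype.card N * Polynomial.eval (c⁻¹ * t) M.charpoly := by
      rw [my_eval_charpoly, h1, Matrix.det_smul, ← my_eval_charpoly]
    rw [hl]
    conv_lhs => rw [hprod]
    simp only [Polynomial.eval_multiset_prod, Multiset.map_map, Function.comp,
      Polynomial.eval_sub, Polynomial.eval_X, Polynomial.eval_C]
    have hconst : c ^ Fintype.card N = (s.map (fun _ => c)).prod := by
      rw [Multiset.map_const', Multiset.prod_replicate, hcard]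
    rw [hconst, ← Multiset.prod_map_mul]
    apply congr_arg
    apply Multiset.map_congr rfl
    intro r _
    field_simp
  rw [key, Polynomial.roots_multiset_prod_X_sub_C]

lemma my_charpoly_skew {p q : Type*} [Fintype p] [Fintype q] [DecidableEq p] [DecidableEq q]
    (Y : Matrix p q ℂ) :
    (Matrix.fromBlocks 0 Y (-Yᵀ) 0).charpoly
      = (Complex.I • Matrix.fromBlocks 0 Y Yᵀ 0).charpoly := by
  apply Polynomial.funext
  intro t
  rw [my_eval_charpoly, my_eval_charpoly]
  set D : Matrix (p ⊕ q) (p ⊕ q) ℂ := Matrix.fromBlocks 1 0 0 (Complex.I • 1) with hD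
  set E : Matrix (p ⊕ q) (p ⊕ q) ℂ := Matrix.fromBlocks 1 0 0 ((-Complex.I) • 1) with hE
  have hDE : D * E = 1 := by
    rw [hD, hE, Matrix.fromBlocks_multiply]
    simp [smul_smul, Complex.I_mul_I, ← Matrix.fromBlocks_one]
  have e1 : t • (1 : Matrix (p ⊕ q) (p ⊕ q) ℂ) - Complex.I • Matrix.fromBlocks 0 Y Yᵀ 0
      = Matrix.fromBlocks (t • 1) (-(Complex.I • Y)) (-(Complex.I • Yᵀ)) (t • 1) := by
    ext (i | i) (j | j) <;> simp [Matrix.one_apply]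
  have e2 : t • (1 : Matrix (p ⊕ q) (p ⊕ q) ℂ) - Matrix.fromBlocks 0 Y (-Yᵀ) 0
      = Matrix.fromBlocks (t • 1) (-Y) Yᵀ (t • 1) := by
    ext (i | i) (j | j) <;> simp [Matrix.one_apply]
  have e3 : D * (t • (1 : Matrix (p ⊕ q) (p ⊕ q) ℂ) - Complex.I • Matrix.fromBlocks 0 Y Yᵀ 0) * E
      = t • (1 : Matrix (p ⊕ q) (p ⊕ q) ℂ) - Matrix.fromBlocks 0 Y (-Yᵀ) 0 := by
    rw [e1, e2, hD, hE, Matrix.fromBlocks_multiply, Matrix.fromBlocks_multiply]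
    simp [Matrix.smul_mul, Matrix.mul_smul, smul_smul, Complex.I_mul_I, mul_comm, mul_left_comm, mul_assoc]
  calc (t • (1 : Matrix (p ⊕ q) (p ⊕ q) ℂ) - Matrix.fromBlocks 0 Y (-Yᵀ) 0).det
      = (D * (t • (1 : Matrix (p ⊕ q) (p ⊕ q) ℂ) - Complex.I • Matrix.fromBlocks 0 Y Yᵀ 0) * E).det := by
        rw [e3]
    _ = (t • (1 : Matrix (p ⊕ q) (p ⊕ q) ℂ) - Complex.I • Matrix.fromBlocks 0 Y Yᵀ 0).det
          * (D * E).det := by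
        rw [Matrix.det_mul, Matrix.det_mul, Matrix.det_mul]; ring
    _ = _ := by rw [hDE, Matrix.det_one, mul_one]

theorem spectrum_skew_block_eq_i_mul_spectrum_sym_block
    (m n : ℕ) (X : Matrix (Fin m) (Fin n) ℝ) :
    spec (Matrix.fromBlocks 0 X (-Xᵀ) 0)
      = (spec (Matrix.fromBlocks 0 X Xᵀ 0)).map (fun z => Complex.I * z) := by
  unfold spec
  set Y : Matrix (Fin m) (Fin n) ℂ := X.map (fun x : ℝ => (x : ℂ)) with hY
  have hmap1 : (Matrix.fromBlocks 0 X (-Xᵀ) 0).map (fun x : ℝ => (x : ℂ))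
      = Matrix.fromBlocks 0 Y (-Yᵀ) 0 := by
    ext (i | i) (j | j) <;> simp [hY]
  have hmap2 : (Matrix.fromBlocks 0 X Xᵀ 0).map (fun x : ℝ => (x : ℂ))
      = Matrix.fromBlocks 0 Y Yᵀ 0 := by
    ext (i | i) (j | j) <;> simp [hY]
  rw [hmap1, hmap2, my_charpoly_skew, my_roots_charpoly_smul Complex.I Complex.I_ne_zero]
end

section
/- Let k ≥ 3 and let X be a real m×n matrix with m, n ≥ k whose entries are all nonnegative, such that for all indices 1 ≤ i, j ≤ k the entry X i j is zero unless j = i or j ≡ i−1 (mod k, identifying residue 0 with k), and such that X i i > 0 and X i j > 0 for j ≡ i−1 (mod k), for all 1 ≤ i ≤ k. Let Y be the matrix obtained from X by replacing the (1,1) entry by −X 1 1. Assume XᵀX is irreducible, i.e., for all indices a, b there exists a positive integer t with ((XᵀX)^t) a b > 0. Then ρ(XᵀX) > ρ(YᵀY), where ρ(M) denotes the spectral radius of M, the maximum of the absolute values of the roots of the characteristic polynomial of M over ℂ. -/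
open Matrix Polynomial

/-- The spectral radius of a real square matrix: the maximum of the absolute values
of the roots of its characteristic polynomial over `ℂ`. -/
noncomputable def specRad {n : Type*} [Fintype n] [DecidableEq n] (M : Matrix n n ℝ) : ℝ :=
  sSup {r : ℝ | ∃ z ∈ spec M, ‖z‖ = r}

section AuxLemmas

variable {n : Type*} [Fintype n] [DecidableEq n] {R : Type*} [CommRing R]

lemma myScalarMul (p : R[X]) (M : Matrix n n R[X]) :
    Matrix.scalar n p * M = p • M := by
  rw [scalar_apply, ← smul_one_eq_diagonal, smul_mul_assoc, one_mul]

lemma myMulScalar (p : R[X]) (M : Matrix n n R[X]) :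
    M * Matrix.scalar n p = p • M := by
  rw [scalar_apply, ← smul_one_eq_diagonal, mul_smul_comm, mul_one]

lemma myCharmatrixConj (P Q M : Matrix n n R) (h1 : P * Q = 1) :
    charmatrix (P * M * Q) = P.map C * charmatrix M * Q.map C := by
  have hmul : ∀ A B : Matrix n n R, (A * B).map (C : R → R[X]) = A.map C * B.map C := by
    intro A B
    exact Matrix.map_mul (f := (C : R →+* R[X]))
  have hone : (1 : Matrix n n R).map (C : R → R[X]) = 1 := by
    apply Matrix.map_one <;> simp
  have hPQ : P.map (C : R → R[X]) * Q.map C = 1 := by rw [← hmul, h1, hone]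
  unfold charmatrix
  simp only [RingHom.mapMatrix_apply]
  rw [mul_sub, sub_mul, myMulScalar, smul_mul_assoc, hPQ, ← myScalarMul, mul_one]
  rw [← hmul, ← hmul]

lemma myCharpolyConj (P Q M : Matrix n n R) (h1 : P * Q = 1) :
    (P * M * Q).charpoly = M.charpoly := by
  have hmul : ∀ A B : Matrix n n R, (A * B).map (C : R → R[X]) = A.map C * B.map C := by
    intro A B
    exact Matrix.map_mul (f := (C : R →+* R[X]))
  have hone : (1 : Matrix n n R).map (C : R → R[X]) = 1 := by
    apply Matrix.map_one <;> simp
  have hdet : (P.map (C : R → R[X])).det * (Q.map C).det = 1 := by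
    rw [← det_mul, ← hmul, h1, hone, det_one]
  rw [Matrix.charpoly, myCharmatrixConj P Q M h1, det_mul, det_mul, mul_right_comm, hdet, one_mul]
  rfl

lemma myCharpolyDiagonal (d : n → R) : (diagonal d).charpoly = ∏ i, (X - C (d i)) := by
  have : charmatrix (diagonal d) = diagonal fun i => X - C (d i) := by
    ext i j
    by_cases h : i = j
    · subst h; simp
    · rw [charmatrix_apply_ne _ _ _ h, diagonal_apply_ne _ h, diagonal_apply_ne _ h, map_zero,
        neg_zero]
  rw [Matrix.charpoly, this, det_diagonal]


lemma myUnitaryFacts (M : Matrix n n ℝ) (hM : M.IsHermitian) :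
    (hM.eigenvectorUnitary : Matrix n n ℝ) * (hM.eigenvectorUnitary : Matrix n n ℝ)ᵀ = 1 ∧
    (hM.eigenvectorUnitary : Matrix n n ℝ)ᵀ * (hM.eigenvectorUnitary : Matrix n n ℝ) = 1 ∧
    M = (hM.eigenvectorUnitary : Matrix n n ℝ) * diagonal hM.eigenvalues *
        (hM.eigenvectorUnitary : Matrix n n ℝ)ᵀ := by
  have hstar : star (hM.eigenvectorUnitary : Matrix n n ℝ)
      = (hM.eigenvectorUnitary : Matrix n n ℝ)ᵀ :=
    conjTranspose_eq_transpose_of_trivial _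
  refine ⟨?_, ?_, ?_⟩
  · rw [← hstar]; exact Unitary.coe_mul_star_self hM.eigenvectorUnitary
  · rw [← hstar]; exact Unitary.coe_star_mul_self hM.eigenvectorUnitary
  · have hdiag : (diagonal (RCLike.ofReal ∘ hM.eigenvalues) : Matrix n n ℝ)
        = diagonal hM.eigenvalues := by congr 1
    conv_lhs => rw [hM.spectral_theorem, Unitary.conjStarAlgAut_apply]
    rw [hstar, hdiag]

lemma myRayleigh (M : Matrix n n ℝ) (hM : M.IsHermitian) (w : n → ℝ) :
    ∃ c : n → ℝ, (w ⬝ᵥ w = ∑ i, c i ^ 2) ∧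
      (w ⬝ᵥ (M *ᵥ w) = ∑ i, hM.eigenvalues i * c i ^ 2) ∧
      (∀ r : ℝ, (∀ i, hM.eigenvalues i * c i = r * c i) → M *ᵥ w = r • w) := by
  obtain ⟨hU1, hU2, hspec⟩ := myUnitaryFacts M hM
  have hUc : (hM.eigenvectorUnitary : Matrix n n ℝ) *ᵥ
      ((hM.eigenvectorUnitary : Matrix n n ℝ)ᵀ *ᵥ w) = w := by
    rw [mulVec_mulVec, hU1, one_mulVec]
  have hdotc : ∀ z : n → ℝ, w ⬝ᵥ ((hM.eigenvectorUnitary : Matrix n n ℝ) *ᵥ z)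
      = ((hM.eigenvectorUnitary : Matrix n n ℝ)ᵀ *ᵥ w) ⬝ᵥ z := by
    intro z
    rw [dotProduct_mulVec, mulVec_transpose]
  have hMw : M *ᵥ w = (hM.eigenvectorUnitary : Matrix n n ℝ) *ᵥ
      (diagonal hM.eigenvalues *ᵥ ((hM.eigenvectorUnitary : Matrix n n ℝ)ᵀ *ᵥ w)) := by
    conv_lhs => rw [hspec]
    rw [mulVec_mulVec, mulVec_mulVec]
  refine ⟨(hM.eigenvectorUnitary : Matrix n n ℝ)ᵀ *ᵥ w, ?_, ?_, ?_⟩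
  · have h := hdotc ((hM.eigenvectorUnitary : Matrix n n ℝ)ᵀ *ᵥ w)
    rw [hUc] at h
    rw [h, dotProduct]
    exact Finset.sum_congr rfl fun i _ => (sq _).symm
  · rw [hMw, hdotc, dotProduct]
    refine Finset.sum_congr rfl fun i _ => ?_
    rw [mulVec_diagonal]
    ring
  · intro r hr
    have hDc : diagonal hM.eigenvalues *ᵥ ((hM.eigenvectorUnitary : Matrix n n ℝ)ᵀ *ᵥ w)
        = r • ((hM.eigenvectorUnitary : Matrix n n ℝ)ᵀ *ᵥ w) := by
      funext i
      rw [mulVec_diagonal, Pi.smul_apply, smul_eq_mul]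
      exact hr i
    rw [hMw, hDc, mulVec_smul, hUc]

lemma myRayleighBound (M : Matrix n n ℝ) (hM : M.IsHermitian) (w : n → ℝ) (r : ℝ)
    (hr : ∀ i, hM.eigenvalues i ≤ r) :
    w ⬝ᵥ (M *ᵥ w) ≤ r * (w ⬝ᵥ w) := by
  obtain ⟨c, h1, h2, _⟩ := myRayleigh M hM w
  rw [h1, h2, Finset.mul_sum]
  exact Finset.sum_le_sum fun i _ =>
    mul_le_mul_of_nonneg_right (hr i) (sq_nonneg _)

lemma myRayleighEqCase (M : Matrix n n ℝ) (hM : M.IsHermitian) (w : n → ℝ) (r : ℝ)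
    (hr : ∀ i, hM.eigenvalues i ≤ r)
    (heq : w ⬝ᵥ (M *ᵥ w) = r * (w ⬝ᵥ w)) : M *ᵥ w = r • w := by
  obtain ⟨c, h1, h2, h3⟩ := myRayleigh M hM w
  rw [h1, h2, Finset.mul_sum] at heq
  have hzero : ∀ i ∈ Finset.univ, (r - hM.eigenvalues i) * c i ^ 2 = 0 := by
    rw [← Finset.sum_eq_zero_iff_of_nonneg
      (fun i _ => mul_nonneg (sub_nonneg.mpr (hr i)) (sq_nonneg _))]
    have : ∀ i ∈ Finset.univ, (r - hM.eigenvalues i) * c i ^ 2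
        = r * c i ^ 2 - hM.eigenvalues i * c i ^ 2 := fun i _ => by ring
    rw [Finset.sum_congr rfl this, Finset.sum_sub_distrib, sub_eq_zero]
    exact heq.symm
  refine h3 r fun i => ?_
  have := hzero i (Finset.mem_univ i)
  rcases mul_eq_zero.mp this with h | h
  · nlinarith [h]
  · have : c i = 0 := by nlinarith [h]
    rw [this, mul_zero, mul_zero]

lemma myEigenvectorExists (M : Matrix n n ℝ) (hM : M.IsHermitian) (i0 : n) :
    ∃ w : n → ℝ, M *ᵥ w = hM.eigenvalues i0 • w ∧ w ⬝ᵥ w = 1 := by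
  obtain ⟨_, hU2, _⟩ := myUnitaryFacts M hM
  refine ⟨⇑(hM.eigenvectorBasis i0), hM.mulVec_eigenvectorBasis i0, ?_⟩
  have := congrFun (congrFun hU2 i0) i0
  rw [mul_apply, one_apply_eq] at this
  rw [dotProduct]
  rw [← this]
  refine Finset.sum_congr rfl fun j _ => ?_
  rw [transpose_apply]
  simp [Matrix.IsHermitian.eigenvectorUnitary_apply]


lemma myCharpolyHermitian (M : Matrix n n ℝ) (hM : M.IsHermitian) :
    M.charpoly = ∏ i, (X - C (hM.eigenvalues i)) := by
  have hU : (hM.eigenvectorUnitary : Matrix n n ℝ) * (star hM.eigenvectorUnitary :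
      Matrix n n ℝ) = 1 := by
    simpa using congrArg Subtype.val (mul_star_self_of_mem hM.eigenvectorUnitary.2)
  have hdiag : (diagonal (RCLike.ofReal ∘ hM.eigenvalues) : Matrix n n ℝ)
      = diagonal hM.eigenvalues := by
    congr 1
  conv_lhs => rw [hM.spectral_theorem, Unitary.conjStarAlgAut_apply]
  rw [myCharpolyConj _ _ _ hU, hdiag, myCharpolyDiagonal]

lemma mySpecEq (M : Matrix n n ℝ) (hM : M.IsHermitian) :
    spec M = Finset.univ.val.map (fun i => ((hM.eigenvalues i : ℝ) : ℂ)) := by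
  unfold spec
  have h0 : M.map (fun x : ℝ => (x : ℂ)) = M.map Complex.ofRealHom := rfl
  rw [h0, Matrix.charpoly_map, myCharpolyHermitian M hM, Polynomial.map_prod]
  simp only [Polynomial.map_sub, map_X, map_C, Complex.ofRealHom_eq_coe]
  rw [show (∏ i, (X - C ((hM.eigenvalues i : ℝ) : ℂ)))
      = ((Finset.univ.val.map fun i => ((hM.eigenvalues i : ℝ) : ℂ)).map
        fun a => X - C a).prod by
    rw [Multiset.map_map]; rfl]
  exact Polynomial.roots_multiset_prod_X_sub_C _

lemma mySpecRadPsd [Nonempty n] {M : Matrix n n ℝ} (hM : M.PosSemidef) :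
    (∀ i, hM.1.eigenvalues i ≤ specRad M) ∧ (∃ i, specRad M = hM.1.eigenvalues i) := by
  have hnn := hM.eigenvalues_nonneg
  have hset : {r : ℝ | ∃ z ∈ spec M, ‖z‖ = r} = Set.range hM.1.eigenvalues := by
    ext r
    simp only [Set.mem_setOf_eq, mySpecEq M hM.1, Multiset.mem_map, Set.mem_range]
    constructor
    · rintro ⟨z, ⟨i, _, rfl⟩, rfl⟩
      exact ⟨i, by rw [Complex.norm_real, Real.norm_eq_abs, abs_of_nonneg (hnn i)]⟩
    · rintro ⟨i, rfl⟩
      exact ⟨((hM.1.eigenvalues i : ℝ) : ℂ), ⟨i, Multiset.mem_toList.mp (by simp), rfl⟩,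
        by rw [Complex.norm_real, Real.norm_eq_abs, abs_of_nonneg (hnn i)]⟩
  constructor
  · intro i
    rw [specRad, hset]
    exact le_csSup ((Set.finite_range _).bddAbove) ⟨i, rfl⟩
  · have : sSup (Set.range hM.1.eigenvalues) ∈ Set.range hM.1.eigenvalues :=
      (Set.range_nonempty _).csSup_mem (Set.finite_range _)
    rw [specRad, hset]
    obtain ⟨i, hi⟩ := this
    exact ⟨i, hi.symm⟩


lemma mySignLemma {ι : Type*} (s : Finset ι) (f : ι → ℝ)
    (h : |∑ i ∈ s, f i| = ∑ i ∈ s, |f i|) :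
    (∀ i ∈ s, 0 ≤ f i) ∨ (∀ i ∈ s, f i ≤ 0) := by
  rcases abs_cases (∑ i ∈ s, f i) with ⟨h1, _⟩ | ⟨h1, _⟩
  · left; intro i hi
    have hz : ∑ j ∈ s, (|f j| - f j) = 0 := by
      rw [Finset.sum_sub_distrib, ← h, h1, sub_self]
    have := (Finset.sum_eq_zero_iff_of_nonneg
      (fun j _ => sub_nonneg.mpr (le_abs_self _))).mp hz i hi
    nlinarith [abs_nonneg (f i)]
  · right; intro i hi
    have hz : ∑ j ∈ s, (|f j| + f j) = 0 := by
      rw [Finset.sum_add_distrib, ← h, h1]; ring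
    have := (Finset.sum_eq_zero_iff_of_nonneg
      (fun j _ => by nlinarith [neg_abs_le (f j)])).mp hz i hi
    nlinarith [abs_nonneg (f i)]


end AuxLemmas

theorem spectral_radius_strictly_decreases
    (k m n : ℕ) (hk : 3 ≤ k) (hm : k ≤ m) (hn : k ≤ n)
    (X : Matrix (Fin m) (Fin n) ℝ)
    (hXnonneg : ∀ i j, 0 ≤ X i j)
    (hzero : ∀ (i j : ℕ) (hi : i < k) (hj : j < k),
      j ≠ i → j ≠ (i + k - 1) % k →
      X ⟨i, lt_of_lt_of_le hi hm⟩ ⟨j, lt_of_lt_of_le hj hn⟩ = 0)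
    (hdiag : ∀ (i : ℕ) (hi : i < k),
      0 < X ⟨i, lt_of_lt_of_le hi hm⟩ ⟨i, lt_of_lt_of_le hi hn⟩)
    (hsub : ∀ (i : ℕ) (hi : i < k),
      0 < X ⟨i, lt_of_lt_of_le hi hm⟩
            ⟨(i + k - 1) % k, lt_of_lt_of_le (Nat.mod_lt _ (by omega)) hn⟩)
    (Y : Matrix (Fin m) (Fin n) ℝ)
    (hY : ∀ i j, Y i j = if (i : ℕ) = 0 ∧ (j : ℕ) = 0 then -X i j else X i j)
    (hirr : ∀ a b : Fin n, ∃ t : ℕ, 0 < t ∧ 0 < ((Xᵀ * X) ^ t) a b) :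
    specRad (Yᵀ * Y) < specRad (Xᵀ * X) := by
  have hNE : Nonempty (Fin n) := ⟨⟨0, by omega⟩⟩
  -- PosSemidef
  have hApsd : (Xᵀ * X).PosSemidef := by
    have := posSemidef_conjTranspose_mul_self X
    rwa [conjTranspose_eq_transpose_of_trivial] at this
  have hBpsd : (Yᵀ * Y).PosSemidef := by
    have := posSemidef_conjTranspose_mul_self Y
    rwa [conjTranspose_eq_transpose_of_trivial] at this
  obtain ⟨hAle, iA, hiA⟩ := mySpecRadPsd hApsd
  obtain ⟨hBle, iB, hiB⟩ := mySpecRadPsd hBpsd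
  set r := specRad (Xᵀ * X) with hrdef
  -- eigenvector of B for its spectral radius
  obtain ⟨w, hweig, hwnorm⟩ := myEigenvectorExists _ hBpsd.1 iB
  rw [← hiB] at hweig
  set v : Fin n → ℝ := fun j => |w j| with hvdef
  have hv_nonneg : ∀ j, 0 ≤ v j := fun j => abs_nonneg _
  have hv1 : v ⬝ᵥ v = 1 := by
    rw [← hwnorm]
    exact Finset.sum_congr rfl fun j _ => abs_mul_abs_self (w j)
  have hYabs : ∀ i j, |Y i j| = X i j := by
    intro i j
    rw [hY]
    split
    · rw [abs_neg, abs_of_nonneg (hXnonneg i j)]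
    · exact abs_of_nonneg (hXnonneg i j)
  have hmvXY : ∀ (M : Matrix (Fin m) (Fin n) ℝ) (u : Fin n → ℝ) (i : Fin m),
      (M *ᵥ u) i = ∑ j, M i j * u j := fun _ _ _ => rfl
  have hmvn : ∀ (M : Matrix (Fin n) (Fin n) ℝ) (u : Fin n → ℝ) (a : Fin n),
      (M *ᵥ u) a = ∑ c, M a c * u c := fun _ _ _ => rfl
  have hXv_nonneg : ∀ i, 0 ≤ (X *ᵥ v) i := by
    intro i
    rw [hmvXY]
    exact Finset.sum_nonneg fun j _ => mul_nonneg (hXnonneg i j) (hv_nonneg j)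
  have hXv_eq : ∀ i, (X *ᵥ v) i = ∑ j, |Y i j * w j| := by
    intro i
    rw [hmvXY]
    refine Finset.sum_congr rfl fun j _ => ?_
    rw [abs_mul, hYabs]
  have hrow_abs_le : ∀ i, |(Y *ᵥ w) i| ≤ (X *ᵥ v) i := by
    intro i
    rw [hXv_eq i, hmvXY Y w i]
    exact Finset.abs_sum_le_sum_abs _ _
  have hrow_le : ∀ i : Fin m, ((Y *ᵥ w) i)^2 ≤ ((X *ᵥ v) i)^2 := by
    intro i
    rw [← sq_abs ((Y *ᵥ w) i)]
    exact pow_le_pow_left₀ (abs_nonneg _) (hrow_abs_le i) 2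
  have hBquad : w ⬝ᵥ ((Yᵀ * Y) *ᵥ w) = ∑ i, ((Y *ᵥ w) i)^2 := by
    rw [← mulVec_mulVec, dotProduct_mulVec, vecMul_transpose]
    exact Finset.sum_congr rfl fun i _ => (sq _).symm
  have hAquad : v ⬝ᵥ ((Xᵀ * X) *ᵥ v) = ∑ i, ((X *ᵥ v) i)^2 := by
    rw [← mulVec_mulVec, dotProduct_mulVec, vecMul_transpose]
    exact Finset.sum_congr rfl fun i _ => (sq _).symm
  have e0 : specRad (Yᵀ * Y) = ∑ i, ((Y *ᵥ w) i)^2 := by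
    rw [← hBquad, hweig, dotProduct_smul, hwnorm, smul_eq_mul, mul_one]
  have e4 : v ⬝ᵥ ((Xᵀ * X) *ᵥ v) ≤ r := by
    have := myRayleighBound (Xᵀ * X) hApsd.1 v r hAle
    rwa [hv1, mul_one] at this
  have hle : specRad (Yᵀ * Y) ≤ r := by
    rw [e0]
    calc ∑ i, ((Y *ᵥ w) i)^2 ≤ ∑ i, ((X *ᵥ v) i)^2 := Finset.sum_le_sum fun i _ => hrow_le i
    _ = v ⬝ᵥ ((Xᵀ * X) *ᵥ v) := hAquad.symm
    _ ≤ r := e4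
  refine lt_of_le_of_ne hle ?_
  intro heq
  -- equality case
  have hsum_eq : ∑ i, ((Y *ᵥ w) i)^2 = ∑ i, ((X *ᵥ v) i)^2 := by
    have h3 : ∑ i, ((Y *ᵥ w) i)^2 = r := by rw [← e0]; exact heq
    have h2 : ∑ i, ((X *ᵥ v) i)^2 ≤ r := hAquad ▸ e4
    have h1 : ∑ i, ((Y *ᵥ w) i)^2 ≤ ∑ i, ((X *ᵥ v) i)^2 :=
      Finset.sum_le_sum fun i _ => hrow_le i
    linarith
  have hAv_eq : v ⬝ᵥ ((Xᵀ * X) *ᵥ v) = r * (v ⬝ᵥ v) := by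
    rw [hv1, mul_one, hAquad, ← hsum_eq, ← e0, heq]
  have heigen : (Xᵀ * X) *ᵥ v = r • v := myRayleighEqCase _ hApsd.1 v r hAle hAv_eq
  have hrows : ∀ i, ((Y *ᵥ w) i)^2 = ((X *ᵥ v) i)^2 :=
    fun i => (Finset.sum_eq_sum_iff_of_le fun i _ => hrow_le i).mp hsum_eq i (Finset.mem_univ i)
  -- Perron positivity of v
  have hA_nonneg : ∀ a b, 0 ≤ (Xᵀ * X) a b := by
    intro a b
    rw [mul_apply]
    exact Finset.sum_nonneg fun i _ => mul_nonneg (hXnonneg i a) (hXnonneg i b)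
  have hApow_nonneg : ∀ (t : ℕ) (a b : Fin n), 0 ≤ ((Xᵀ * X)^t) a b := by
    intro t
    induction t with
    | zero => intro a b; rw [pow_zero]; by_cases h : a = b <;> simp [one_apply, h]
    | succ t ih =>
      intro a b
      rw [pow_succ, mul_apply]
      exact Finset.sum_nonneg fun c _ => mul_nonneg (ih a c) (hA_nonneg c b)
  have hpow : ∀ t, ((Xᵀ * X)^t) *ᵥ v = r^t • v := by
    intro t
    induction t with
    | zero => rw [pow_zero, one_mulVec, pow_zero, one_smul]
    | succ t ih =>
      rw [pow_succ, ← mulVec_mulVec, heigen, mulVec_smul, ih, smul_smul, ← pow_succ']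
  obtain ⟨b0, hb0⟩ : ∃ b0, 0 < v b0 := by
    by_contra hcon
    push_neg at hcon
    have : ∀ j, v j = 0 := fun j => le_antisymm (hcon j) (hv_nonneg j)
    have : v ⬝ᵥ v = 0 := by
      rw [dotProduct]
      exact Finset.sum_eq_zero fun j _ => by rw [this j, mul_zero]
    rw [hv1] at this
    norm_num at this
  have hdom : ∀ (a b : Fin n) (t : ℕ), 0 < ((Xᵀ * X)^t) a b → 0 < v b → 0 < r^t * v a := by
    intro a b t hab hvb
    have h1 : r^t * v a = (((Xᵀ * X)^t) *ᵥ v) a := by rw [hpow]; rfl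
    rw [h1, hmvn]
    calc (0:ℝ) < ((Xᵀ * X)^t) a b * v b := mul_pos hab hvb
    _ ≤ ∑ c, ((Xᵀ * X)^t) a c * v c :=
        Finset.single_le_sum (f := fun c => ((Xᵀ * X)^t) a c * v c)
          (fun c _ => mul_nonneg (hApow_nonneg t a c) (hv_nonneg c)) (Finset.mem_univ b)
  have hr_nonneg : 0 ≤ r := hiA ▸ hApsd.eigenvalues_nonneg iA
  have hr_pos : 0 < r := by
    obtain ⟨t, ht, htpos⟩ := hirr b0 b0
    have := hdom b0 b0 t htpos hb0
    by_contra hcon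
    push_neg at hcon
    have hr0 : r = 0 := le_antisymm hcon hr_nonneg
    rw [hr0, zero_pow ht.ne', zero_mul] at this
    exact lt_irrefl 0 this
  have hv_pos : ∀ a, 0 < v a := by
    intro a
    obtain ⟨t, ht, htpos⟩ := hirr a b0
    have h := hdom a b0 t htpos hb0
    have hrt : 0 < r^t := pow_pos hr_pos t
    nlinarith
  have hw_ne : ∀ j, w j ≠ 0 := by
    intro j hj
    have := hv_pos j
    rw [hvdef] at this
    simp only [hj, abs_zero] at this
    exact lt_irrefl 0 this
  -- row sign structure
  have habs_row : ∀ i : Fin m, |∑ j, Y i j * w j| = ∑ j, |Y i j * w j| := by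
    intro i
    have h1 : |(Y *ᵥ w) i| = |(X *ᵥ v) i| := by
      rw [← Real.sqrt_sq_eq_abs, ← Real.sqrt_sq_eq_abs, hrows i]
    rw [abs_of_nonneg (hXv_nonneg i)] at h1
    have h2 : (Y *ᵥ w) i = ∑ j, Y i j * w j := rfl
    rw [← h2, h1, hXv_eq]
  have hsign : ∀ i : Fin m, (∀ j, 0 ≤ Y i j * w j) ∨ (∀ j, Y i j * w j ≤ 0) := by
    intro i
    rcases mySignLemma Finset.univ (fun j => Y i j * w j) (habs_row i) with h | h
    · exact Or.inl fun j => h j (Finset.mem_univ j)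
    · exact Or.inr fun j => h j (Finset.mem_univ j)
  -- sign helpers
  have hposneg : ∀ (y t : ℝ), 0 < y → t ≠ 0 → 0 ≤ y * t → 0 < t := by
    intro y t hy ht h
    rcases lt_trichotomy t 0 with h' | h' | h'
    · nlinarith
    · exact absurd h' ht
    · exact h'
  have hnegneg : ∀ (y t : ℝ), 0 < y → t ≠ 0 → y * t ≤ 0 → t < 0 := by
    intro y t hy ht h
    rcases lt_trichotomy t 0 with h' | h' | h'
    · exact h'
    · exact absurd h' ht
    · nlinarith
  -- positive entries of Y in the first k rows
  have hYdiag : ∀ (i : ℕ) (hi : i < k), i ≠ 0 →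
      0 < Y ⟨i, lt_of_lt_of_le hi hm⟩ ⟨i, lt_of_lt_of_le hi hn⟩ := by
    intro i hi hi0
    rw [hY]
    rw [if_neg (by simp [hi0])]
    exact hdiag i hi
  -- the chain step
  have hstep : ∀ i : ℕ, (hi1 : i + 1 < k) →
      (0 < w ⟨i + 1, lt_of_lt_of_le hi1 hn⟩ ↔ 0 < w ⟨i, lt_of_lt_of_le (by omega) hn⟩) := by
    intro i hi1
    have hidx : (i + 1 + k - 1) % k = i := by
      have h1 : i + 1 + k - 1 = i + k := by omega
      rw [h1, Nat.add_mod_right, Nat.mod_eq_of_lt (by omega)]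
    have hYd : 0 < Y ⟨i + 1, lt_of_lt_of_le hi1 hm⟩ ⟨i + 1, lt_of_lt_of_le hi1 hn⟩ :=
      hYdiag (i + 1) hi1 (by omega)
    have hYs : 0 < Y ⟨i + 1, lt_of_lt_of_le hi1 hm⟩ ⟨i, lt_of_lt_of_le (by omega) hn⟩ := by
      have h := hsub (i + 1) hi1
      have hfin : (⟨(i + 1 + k - 1) % k, lt_of_lt_of_le (Nat.mod_lt _ (by omega)) hn⟩ : Fin n)
          = ⟨i, lt_of_lt_of_le (by omega) hn⟩ := Fin.ext hidx
      rw [hfin] at h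
      rw [hY, if_neg (by simp)]
      exact h
    rcases hsign ⟨i + 1, lt_of_lt_of_le hi1 hm⟩ with h | h
    · have hw1 := hposneg _ _ hYd (hw_ne _) (h ⟨i + 1, lt_of_lt_of_le hi1 hn⟩)
      have hw2 := hposneg _ _ hYs (hw_ne _) (h ⟨i, lt_of_lt_of_le (by omega) hn⟩)
      exact iff_of_true hw1 hw2
    · have hw1 := hnegneg _ _ hYd (hw_ne _) (h ⟨i + 1, lt_of_lt_of_le hi1 hn⟩)
      have hw2 := hnegneg _ _ hYs (hw_ne _) (h ⟨i, lt_of_lt_of_le (by omega) hn⟩)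
      exact iff_of_false (asymm hw1) (asymm hw2)
  have hchain : ∀ i : ℕ, (hi : i < k) →
      (0 < w ⟨i, lt_of_lt_of_le hi hn⟩ ↔ 0 < w ⟨0, lt_of_lt_of_le (by omega) hn⟩) := by
    intro i
    induction i with
    | zero => intro _; rfl
    | succ i ih =>
      intro hi
      exact (hstep i hi).trans (ih (by omega))
  -- row 0 analysis
  have hidx0 : (0 + k - 1) % k = k - 1 := by
    have h1 : 0 + k - 1 = k - 1 := by omega
    rw [h1, Nat.mod_eq_of_lt (by omega)]
  have hY00 : Y ⟨0, lt_of_lt_of_le (by omega) hm⟩ ⟨0, lt_of_lt_of_le (by omega) hn⟩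
      = -X ⟨0, lt_of_lt_of_le (by omega) hm⟩ ⟨0, lt_of_lt_of_le (by omega) hn⟩ := by
    rw [hY, if_pos (by simp)]
  have hX00 : 0 < X ⟨0, lt_of_lt_of_le (by omega) hm⟩ ⟨0, lt_of_lt_of_le (by omega) hn⟩ :=
    hdiag 0 (by omega)
  have hY0k : 0 < Y ⟨0, lt_of_lt_of_le (by omega) hm⟩ ⟨k - 1, lt_of_lt_of_le (by omega) hn⟩ := by
    have h := hsub 0 (by omega)
    have hfin : (⟨(0 + k - 1) % k, lt_of_lt_of_le (Nat.mod_lt _ (by omega)) hn⟩ : Fin n)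
        = ⟨k - 1, lt_of_lt_of_le (by omega) hn⟩ := Fin.ext hidx0
    rw [hfin] at h
    rw [hY, if_neg (by simp; omega)]
    exact h
  have hchain_end := hchain (k - 1) (by omega)
  rcases hsign ⟨0, lt_of_lt_of_le (by omega) hm⟩ with h | h
  · -- all terms nonneg: Y00 * w0 ≥ 0 with Y00 < 0 ⇒ w0 < 0 ; Y0(k-1)*w(k-1) ≥ 0 ⇒ w(k-1) > 0
    have h1 := h ⟨0, lt_of_lt_of_le (by omega) hn⟩
    rw [hY00] at h1
    have hw0 : w ⟨0, lt_of_lt_of_le (by omega) hn⟩ < 0 := by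
      have := hnegneg _ _ hX00 (hw_ne _) (by nlinarith)
      exact this
    have hwk := hposneg _ _ hY0k (hw_ne _) (h ⟨k - 1, lt_of_lt_of_le (by omega) hn⟩)
    exact absurd (hchain_end.mp hwk) (asymm hw0)
  · have h1 := h ⟨0, lt_of_lt_of_le (by omega) hn⟩
    rw [hY00] at h1
    have hw0 : 0 < w ⟨0, lt_of_lt_of_le (by omega) hn⟩ := by
      have := hposneg _ _ hX00 (hw_ne _) (by nlinarith)
      exact this
    have hwk := hnegneg _ _ hY0k (hw_ne _) (h ⟨k - 1, lt_of_lt_of_le (by omega) hn⟩)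
    exact absurd (hchain_end.mpr hw0) (asymm hwk)
end
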